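/- Let f : [0,∞) → ℝ be (α,m)-convex with (α,m) ∈ (0,1]². If 0 ≤ a < b < ∞ and f is integrable on [a,b] and on [a/m, b/m], then f((a+b)/2) ≤ (1/(b-a)) ∫_a^b [f(x) + m(2^α − 1)·f(x/m)] / 2^α dx. -/

import Mathlib

open MeasureTheory intervalIntegral

theorem alpha_m_convex_hh_left (f : ℝ → ℝ) (α m a b : ℝ)
    (hα : α ∈ Set.Ioc (0:ℝ) 1) (hm : m ∈ Set.Ioc (0:ℝ) 1)
    (hconv : ∀ x, 0 ≤ x → ∀ y, 0 ≤ y → ∀ t ∈ Set.Icc (0:ℝ) 1,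
      f (t * x + m * (1 - t) * y) ≤ t ^ α * f x + m * (1 - t ^ α) * f y)
    (ha : 0 ≤ a) (hab : a < b)
    (hint : IntervalIntegrable f MeasureTheory.volume a b)
    (hint' : IntervalIntegrable f MeasureTheory.volume (a / m) (b / m)) :
    f ((a + b) / 2) ≤
      (1 / (b - a)) * ∫ x in a..b, (f x + m * ((2:ℝ) ^ α - 1) * f (x / m)) / (2:ℝ) ^ α := by
  obtain ⟨hm0, hm1⟩ := hm
  obtain ⟨hα0, hα1⟩ := hα
  have mne : m ≠ 0 := ne_of_gt hm0
  -- integrability of x ↦ f (x/m) on [a,b]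
  have hg : IntervalIntegrable (fun x => f (x / m)) volume a b := by
    have h := hint'.comp_mul_right (c := m⁻¹)
    have e1 : a / m / m⁻¹ = a := by field_simp
    have e2 : b / m / m⁻¹ = b := by field_simp
    rw [e1, e2] at h
    simpa [div_eq_mul_inv] using h
  -- integrability of x ↦ f ((a+b-x)/m) on [a,b]
  have hrefl : IntervalIntegrable (fun x => f ((a + b - x) / m)) volume a b := by
    have h := hg.comp_sub_left (a + b)
    simpa using h.symm
  set A : ℝ := (2:ℝ) ^ α with hA
  have hApos : 0 < A := Real.rpow_pos_of_pos (by norm_num) α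
  have hhalf : ((1:ℝ)/2) ^ α = 1 / A := by
    rw [hA, Real.div_rpow (by norm_num) (by norm_num), Real.one_rpow]
  -- pointwise inequality
  have hpt : ∀ x ∈ Set.Icc a b,
      f ((a + b) / 2) ≤ (1/A) * f x + m * (1 - 1/A) * f ((a + b - x) / m) := by
    intro x hx
    have hx0 : 0 ≤ x := le_trans ha hx.1
    have hy0 : 0 ≤ (a + b - x) / m := by
      apply div_nonneg _ hm0.le
      have : x ≤ a + b := le_trans hx.2 (by linarith)
      linarith
    have := hconv x hx0 _ hy0 (1/2) (by constructor <;> norm_num)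
    rw [hhalf] at this
    calc f ((a + b) / 2) = f (1/2 * x + m * (1 - 1/2) * ((a + b - x) / m)) := by
            congr 1; field_simp; ring
      _ ≤ (1/A) * f x + m * (1 - 1/A) * f ((a + b - x) / m) := this
  -- combined integrand integrability
  have hcomb : IntervalIntegrable
      (fun x => (1/A) * f x + m * (1 - 1/A) * f ((a + b - x) / m)) volume a b :=
    (hint.const_mul _).add (hrefl.const_mul _)
  have hmono := intervalIntegral.integral_mono_on hab.le
    (_root_.intervalIntegrable_const (c := f ((a + b) / 2))) hcomb hpt
  rw [intervalIntegral.integral_const, smul_eq_mul] at hmono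
  -- compute integral of combined
  have hreflint : (∫ x in a..b, f ((a + b - x) / m)) = ∫ x in a..b, f (x / m) := by
    have h := intervalIntegral.integral_comp_sub_left (a := a) (b := b) (fun x => f (x / m)) (a + b)
    simpa using h
  have hsplit : (∫ x in a..b, (1/A) * f x + m * (1 - 1/A) * f ((a + b - x) / m))
      = (1/A) * (∫ x in a..b, f x) + m * (1 - 1/A) * ∫ x in a..b, f (x / m) := by
    rw [intervalIntegral.integral_add (hint.const_mul _) (hrefl.const_mul _),
      intervalIntegral.integral_const_mul, intervalIntegral.integral_const_mul, hreflint]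
  rw [hsplit] at hmono
  -- compute RHS integral
  have hrhs : (∫ x in a..b, (f x + m * ((2:ℝ) ^ α - 1) * f (x / m)) / (2:ℝ) ^ α)
      = ((∫ x in a..b, f x) + m * (A - 1) * ∫ x in a..b, f (x / m)) / A := by
    rw [← hA]
    rw [intervalIntegral.integral_div,
      intervalIntegral.integral_add hint (hg.const_mul _),
      intervalIntegral.integral_const_mul]
  rw [hrhs]
  have hba : 0 < b - a := by linarith
  rw [mul_comm, mul_one_div, le_div_iff₀ hba, le_div_iff₀ hApos]
  calc f ((a + b) / 2) * (b - a) * A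
      ≤ ((1/A) * (∫ x in a..b, f x) + m * (1 - 1/A) * ∫ x in a..b, f (x / m)) * A := by
        apply mul_le_mul_of_nonneg_right _ hApos.le
        rw [mul_comm] at hmono; exact hmono
    _ = (∫ x in a..b, f x) + m * (A - 1) * ∫ x in a..b, f (x / m) := by
        field_simp
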